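/- Under the hypotheses of Theorem 1, if the maximal coefficient degree at step k is attained first at index l = 1 (i.e. deg A_{k,1} ≥ deg A_{k,j} for all j), then deg A_{k+1,m} = deg A_{k,1} + S + 1 and deg A_{k+1,h} ≤ deg A_{k,1} + S < deg A_{k+1,m} for all h ≤ m-1. -/

import Mathlib

open Polynomial

private lemma wb_le {x y : ℕ} (h : x ≤ y) : (x : WithBot ℕ) ≤ (y : WithBot ℕ) := by
  simp [Nat.cast_withBot, WithBot.coe_le_coe, h]

private lemma wb_lt {x y : ℕ} (h : x < y) : (x : WithBot ℕ) < (y : WithBot ℕ) := by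
  simp [Nat.cast_withBot, WithBot.coe_lt_coe, h]

private lemma aux_xderiv {K : Type*} [Field K] (p : Polynomial K) :
    (X * derivative p).degree ≤ p.degree := by
  rcases eq_or_ne (derivative p) 0 with h | h
  · simp [h]
  · have hp : p ≠ 0 := fun hp => h (by simp [hp])
    have hp0 : p.natDegree ≠ 0 := by
      intro h0
      obtain ⟨c, hc⟩ := natDegree_eq_zero.mp h0
      exact h (by simp [← hc])
    have hx : X * derivative p ≠ 0 := mul_ne_zero X_ne_zero h
    rw [degree_eq_natDegree hx, degree_eq_natDegree hp]
    refine wb_le ?_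
    rw [natDegree_mul X_ne_zero h, natDegree_X]
    have := natDegree_derivative_lt hp0
    omega

private lemma wb_lt_succ {d : WithBot ℕ} {n : ℕ} (h : d < (n : WithBot ℕ) + 1) :
    d ≤ (n : WithBot ℕ) := by
  have h1 : d + 1 ≤ (n : WithBot ℕ) + 1 := Nat.WithBot.add_one_le_of_lt h
  exact (WithBot.add_le_add_iff_right (by simp : (1 : WithBot ℕ) ≠ ⊥)).mp h1

/-- **Degree step, case `l = 1`** (formula (220) of the paper). Under the hypotheses of
Theorem 1, if the maximal coefficient degree at step `k` is attained first at index `l = 1`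
(i.e. `deg A_{k,1} ≥ deg A_{k,j}` for all `j`, with `deg A_{k,1}` finite), then
`deg A_{k+1,m} = deg A_{k,1} + S + 1` and for all `h ≤ m-1`,
`deg A_{k+1,h} ≤ deg A_{k,1} + S < deg A_{k+1,m}`.
(`A n j` with `j : Fin m` stands for `A_{n,j+1}`.) -/
theorem stmt5 (K : Type*) [Field K] [CharZero K]
    (m : ℕ) (hm : 2 ≤ m)
    (N : Polynomial K) (P : Fin m → Polynomial K)
    (hN : N ≠ 0)
    (hPm : (P ⟨m - 1, by omega⟩).degree = N.degree + 1)
    (hPj : ∀ j : Fin m, (j : ℕ) + 1 < m → (P j).degree < N.degree + 1)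
    (A : ℕ → Fin m → Polynomial K)
    (hrec : ∀ k : ℕ, ∀ j : Fin m, ∀ h : (j : ℕ) + 1 < m,
      A (k + 1) j = P j * A k ⟨0, by omega⟩
        + N * (X * derivative (A k j)) + N * A k ⟨(j : ℕ) + 1, h⟩)
    (hrecm : ∀ k : ℕ,
      A (k + 1) ⟨m - 1, by omega⟩ = P ⟨m - 1, by omega⟩ * A k ⟨0, by omega⟩
        + N * (X * derivative (A k ⟨m - 1, by omega⟩)))
    (k : ℕ)
    (hd1 : A k ⟨0, by omega⟩ ≠ 0)
    (hmax : ∀ j : Fin m, (A k j).degree ≤ (A k ⟨0, by omega⟩).degree) :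
    (A (k + 1) ⟨m - 1, by omega⟩).degree = (A k ⟨0, by omega⟩).degree + N.degree + 1 ∧
    (∀ h : Fin m, (h : ℕ) + 1 < m →
      (A (k + 1) h).degree ≤ (A k ⟨0, by omega⟩).degree + N.degree ∧
      (A k ⟨0, by omega⟩).degree + N.degree < (A (k + 1) ⟨m - 1, by omega⟩).degree) := by

  have hn : N.degree = (N.natDegree : WithBot ℕ) := degree_eq_natDegree hN
  have ha : (A k ⟨0, by omega⟩).degree = ((A k ⟨0, by omega⟩).natDegree : WithBot ℕ) :=
    degree_eq_natDegree hd1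
  set n := N.natDegree
  set a := (A k ⟨0, by omega⟩).natDegree
  have hPm0 : P ⟨m - 1, by omega⟩ ≠ 0 := by
    intro h0
    rw [h0, degree_zero, hn] at hPm
    have : ((n : WithBot ℕ) + 1) ≠ ⊥ := by
      simp [Nat.cast_withBot, WithBot.add_eq_bot]
    exact this hPm.symm
  have hT1 : (P ⟨m - 1, by omega⟩ * A k ⟨0, by omega⟩).degree
      = ((n + 1 + a : ℕ) : WithBot ℕ) := by
    rw [degree_mul, hPm, hn, ha]
    push_cast; ring
  have hT2 : (N * (X * derivative (A k ⟨m - 1, by omega⟩))).degree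
      ≤ ((n + a : ℕ) : WithBot ℕ) := by
    rw [degree_mul]
    calc N.degree + (X * derivative (A k ⟨m - 1, by omega⟩)).degree
        ≤ N.degree + (A k ⟨m - 1, by omega⟩).degree :=
          add_le_add_right (aux_xderiv _) _
      _ ≤ N.degree + (A k ⟨0, by omega⟩).degree := add_le_add_right (hmax _) _
      _ = ((n + a : ℕ) : WithBot ℕ) := by rw [hn, ha]; push_cast; ring
  have hlt : (N * (X * derivative (A k ⟨m - 1, by omega⟩))).degree
      < (P ⟨m - 1, by omega⟩ * A k ⟨0, by omega⟩).degree := by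
    rw [hT1]
    exact lt_of_le_of_lt hT2 (wb_lt (by omega))
  have hmain : (A (k + 1) ⟨m - 1, by omega⟩).degree
      = (A k ⟨0, by omega⟩).degree + N.degree + 1 := by
    rw [hrecm k, degree_add_eq_left_of_degree_lt hlt, hT1, hn, ha]
    push_cast; ring
  refine ⟨hmain, fun h hh => ?_⟩
  have bound : ((n + a : ℕ) : WithBot ℕ) = (A k ⟨0, by omega⟩).degree + N.degree := by
    rw [hn, ha]; push_cast; ring
  constructor
  · rw [hrec k h hh, ← bound]
    refine le_trans (degree_add_le _ _) (max_le (le_trans (degree_add_le _ _)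
      (max_le ?_ ?_)) ?_)
    · rw [degree_mul]
      have h1 : (P h).degree ≤ (n : WithBot ℕ) := wb_lt_succ (by rw [← hn]; exact hPj h hh)
      calc (P h).degree + (A k ⟨0, by omega⟩).degree
          ≤ (n : WithBot ℕ) + (a : WithBot ℕ) := add_le_add h1 (le_of_eq ha)
        _ = ((n + a : ℕ) : WithBot ℕ) := by push_cast; ring
    · rw [degree_mul]
      calc N.degree + (X * derivative (A k h)).degree
          ≤ N.degree + (A k h).degree := add_le_add_right (aux_xderiv _) _
        _ ≤ N.degree + (A k ⟨0, by omega⟩).degree := add_le_add_right (hmax _) _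
        _ = ((n + a : ℕ) : WithBot ℕ) := by rw [hn, ha]; push_cast; ring
    · rw [degree_mul]
      calc N.degree + (A k ⟨(h : ℕ) + 1, hh⟩).degree
          ≤ N.degree + (A k ⟨0, by omega⟩).degree := add_le_add_right (hmax _) _
        _ = ((n + a : ℕ) : WithBot ℕ) := by rw [hn, ha]; push_cast; ring
  · rw [hmain, ← bound]
    have e : ((n + a : ℕ) : WithBot ℕ) + 1 = ((n + a + 1 : ℕ) : WithBot ℕ) := by
      push_cast; ring
    rw [e]
    exact wb_lt (by omega)
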